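/- Every subgraph G of the complete bipartite graph K_{7,30} contains a copy of K_{2,2}, or the bipartite complement of G contains a copy of K_{5,5}. (Hence BR_7(K_{2,2}, K_{5,5}) ≤ 30.) -/

import Mathlib

set_option maxRecDepth 4000


/-- A subgraph of the complete bipartite graph `K_{m,n}` is identified with its
edge set, a finset of pairs `(x, y)` with `x` in the part `X = Fin m` and
`y` in the part `Y = Fin n`.  `bContains s t E` says that the bipartite graph
with edge set `E` contains a copy of `K_{s,t}`: there are `s` distinct
vertices of `X` and `t` distinct vertices of `Y` with all pairs present. -/
def bContains {m n : ℕ} (s t : ℕ) (E : Finset (Fin m × Fin n)) : Prop :=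
  ∃ (A : Finset (Fin m)) (B : Finset (Fin n)),
    A.card = s ∧ B.card = t ∧ ∀ x ∈ A, ∀ y ∈ B, (x, y) ∈ E

/-- The bipartite complement: edge set `(X × Y) \ E`. -/
def bCompl {m n : ℕ} (E : Finset (Fin m × Fin n)) : Finset (Fin m × Fin n) :=
  Finset.univ \ E

/-- The neighborhood `N_G(x) ⊆ Y` of a vertex `x ∈ X`. -/
def bNbhd {m n : ℕ} (E : Finset (Fin m × Fin n)) (x : Fin m) : Finset (Fin n) :=
  Finset.univ.filter (fun y => (x, y) ∈ E)

/-- The degree of a vertex `x ∈ X`. -/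
def bDeg {m n : ℕ} (E : Finset (Fin m × Fin n)) (x : Fin m) : ℕ :=
  (bNbhd E x).card

/-- `Δ(G_X)`: the maximum degree over the vertices of the part `X`. -/
def bMaxDegX {m n : ℕ} (E : Finset (Fin m × Fin n)) : ℕ :=
  Finset.univ.sup (fun x => bDeg E x)

/-! ### Auxiliary definitions and lemmas -/

def Sfun (E : Finset (Fin 7 × Fin 30)) (y : Fin 30) : Finset (Fin 7) :=
  Finset.univ.filter (fun x => (x, y) ∈ E)

def fib (E : Finset (Fin 7 × Fin 30)) (T : Finset (Fin 7)) : ℕ :=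
  (Finset.univ.filter (fun y => Sfun E y = T)).card


lemma tri (n a b c u v w : ℕ) (h1 : n + a + b + u ≤ 4) (h2 : n + a + c + v ≤ 4)
    (h3 : n + b + c + w ≤ 4) (hu : u ≤ 1) (hv : v ≤ 1) (hw : w ≤ 1) :
    n + a + b + c + u + v + w ≤ 7 := by omega

lemma step2 (n0 n1 n2 k s M : ℕ) (h1 : n1 + n2 + k = 30) (h2 : n1 ≤ n0 + s)
    (h3 : n2 ≤ M) (h4 : n2 + 3*k ≤ 21) (hM : M ≤ 21)
    (hcut : 35*n0 + 15*s + 5*M ≤ 245) : n0 = 0 ∧ 9 ≤ s ∧ M = 21 := by omega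

lemma pairbound (n a b m : ℕ) (h : n + a + b + m ≤ 4) (hz : n = 0) (hm : m = 1) :
    a + b ≤ 3 := by omega

lemma lastp (a0 a1 a2 a3 a4 a5 a6 : ℕ)
    (h01 : a0 + a1 ≤ 3)
    (h02 : a0 + a2 ≤ 3)
    (h03 : a0 + a3 ≤ 3)
    (h04 : a0 + a4 ≤ 3)
    (h05 : a0 + a5 ≤ 3)
    (h06 : a0 + a6 ≤ 3)
    (h12 : a1 + a2 ≤ 3)
    (h13 : a1 + a3 ≤ 3)
    (h14 : a1 + a4 ≤ 3)
    (h15 : a1 + a5 ≤ 3)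
    (h16 : a1 + a6 ≤ 3)
    (h23 : a2 + a3 ≤ 3)
    (h24 : a2 + a4 ≤ 3)
    (h25 : a2 + a5 ≤ 3)
    (h26 : a2 + a6 ≤ 3)
    (h34 : a3 + a4 ≤ 3)
    (h35 : a3 + a5 ≤ 3)
    (h36 : a3 + a6 ≤ 3)
    (h45 : a4 + a5 ≤ 3)
    (h46 : a4 + a6 ≤ 3)
    (h56 : a5 + a6 ≤ 3)
    (hs : 9 ≤ a0 + a1 + a2 + a3 + a4 + a5 + a6) : False := by omega

lemma step3 (m01 m02 m03 m04 m05 m06 m12 m13 m14 m15 m16 m23 m24 m25 m26 m34 m35 m36 m45 m46 m56 : ℕ)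
    (hm01 : m01 ≤ 1)
    (hm02 : m02 ≤ 1)
    (hm03 : m03 ≤ 1)
    (hm04 : m04 ≤ 1)
    (hm05 : m05 ≤ 1)
    (hm06 : m06 ≤ 1)
    (hm12 : m12 ≤ 1)
    (hm13 : m13 ≤ 1)
    (hm14 : m14 ≤ 1)
    (hm15 : m15 ≤ 1)
    (hm16 : m16 ≤ 1)
    (hm23 : m23 ≤ 1)
    (hm24 : m24 ≤ 1)
    (hm25 : m25 ≤ 1)
    (hm26 : m26 ≤ 1)
    (hm34 : m34 ≤ 1)
    (hm35 : m35 ≤ 1)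
    (hm36 : m36 ≤ 1)
    (hm45 : m45 ≤ 1)
    (hm46 : m46 ≤ 1)
    (hm56 : m56 ≤ 1)
    (hM : m01 + m02 + m03 + m04 + m05 + m06 + m12 + m13 + m14 + m15 + m16 + m23 + m24 + m25 + m26 + m34 + m35 + m36 + m45 + m46 + m56 = 21) : m01 = 1 ∧ m02 = 1 ∧ m03 = 1 ∧ m04 = 1 ∧ m05 = 1 ∧ m06 = 1 ∧ m12 = 1 ∧ m13 = 1 ∧ m14 = 1 ∧ m15 = 1 ∧ m16 = 1 ∧ m23 = 1 ∧ m24 = 1 ∧ m25 = 1 ∧ m26 = 1 ∧ m34 = 1 ∧ m35 = 1 ∧ m36 = 1 ∧ m45 = 1 ∧ m46 = 1 ∧ m56 = 1 := by omega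

lemma core (n0 n1 n2 k a0 a1 a2 a3 a4 a5 a6 m01 m02 m03 m04 m05 m06 m12 m13 m14 m15 m16 m23 m24 m25 m26 m34 m35 m36 m45 m46 m56 : ℕ)
    (h1 : n1 + n2 + k = 30)
    (h2 : n1 ≤ n0 + (a0 + a1 + a2 + a3 + a4 + a5 + a6))
    (h3 : n2 ≤ m01 + m02 + m03 + m04 + m05 + m06 + m12 + m13 + m14 + m15 + m16 + m23 + m24 + m25 + m26 + m34 + m35 + m36 + m45 + m46 + m56)
    (h4 : n2 + 3*k ≤ 21)
    (hm01 : m01 ≤ 1)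
    (hm02 : m02 ≤ 1)
    (hm03 : m03 ≤ 1)
    (hm04 : m04 ≤ 1)
    (hm05 : m05 ≤ 1)
    (hm06 : m06 ≤ 1)
    (hm12 : m12 ≤ 1)
    (hm13 : m13 ≤ 1)
    (hm14 : m14 ≤ 1)
    (hm15 : m15 ≤ 1)
    (hm16 : m16 ≤ 1)
    (hm23 : m23 ≤ 1)
    (hm24 : m24 ≤ 1)
    (hm25 : m25 ≤ 1)
    (hm26 : m26 ≤ 1)
    (hm34 : m34 ≤ 1)
    (hm35 : m35 ≤ 1)
    (hm36 : m36 ≤ 1)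
    (hm45 : m45 ≤ 1)
    (hm46 : m46 ≤ 1)
    (hm56 : m56 ≤ 1)
    (hp01 : n0 + a0 + a1 + m01 ≤ 4)
    (hp02 : n0 + a0 + a2 + m02 ≤ 4)
    (hp03 : n0 + a0 + a3 + m03 ≤ 4)
    (hp04 : n0 + a0 + a4 + m04 ≤ 4)
    (hp05 : n0 + a0 + a5 + m05 ≤ 4)
    (hp06 : n0 + a0 + a6 + m06 ≤ 4)
    (hp12 : n0 + a1 + a2 + m12 ≤ 4)
    (hp13 : n0 + a1 + a3 + m13 ≤ 4)
    (hp14 : n0 + a1 + a4 + m14 ≤ 4)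
    (hp15 : n0 + a1 + a5 + m15 ≤ 4)
    (hp16 : n0 + a1 + a6 + m16 ≤ 4)
    (hp23 : n0 + a2 + a3 + m23 ≤ 4)
    (hp24 : n0 + a2 + a4 + m24 ≤ 4)
    (hp25 : n0 + a2 + a5 + m25 ≤ 4)
    (hp26 : n0 + a2 + a6 + m26 ≤ 4)
    (hp34 : n0 + a3 + a4 + m34 ≤ 4)
    (hp35 : n0 + a3 + a5 + m35 ≤ 4)
    (hp36 : n0 + a3 + a6 + m36 ≤ 4)
    (hp45 : n0 + a4 + a5 + m45 ≤ 4)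
    (hp46 : n0 + a4 + a6 + m46 ≤ 4)
    (hp56 : n0 + a5 + a6 + m56 ≤ 4)
    : False := by
  have t012 := tri n0 a0 a1 a2 m01 m02 m12 hp01 hp02 hp12 hm01 hm02 hm12
  have t013 := tri n0 a0 a1 a3 m01 m03 m13 hp01 hp03 hp13 hm01 hm03 hm13
  have t014 := tri n0 a0 a1 a4 m01 m04 m14 hp01 hp04 hp14 hm01 hm04 hm14
  have t015 := tri n0 a0 a1 a5 m01 m05 m15 hp01 hp05 hp15 hm01 hm05 hm15
  have t016 := tri n0 a0 a1 a6 m01 m06 m16 hp01 hp06 hp16 hm01 hm06 hm16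
  have t023 := tri n0 a0 a2 a3 m02 m03 m23 hp02 hp03 hp23 hm02 hm03 hm23
  have t024 := tri n0 a0 a2 a4 m02 m04 m24 hp02 hp04 hp24 hm02 hm04 hm24
  have t025 := tri n0 a0 a2 a5 m02 m05 m25 hp02 hp05 hp25 hm02 hm05 hm25
  have t026 := tri n0 a0 a2 a6 m02 m06 m26 hp02 hp06 hp26 hm02 hm06 hm26
  have t034 := tri n0 a0 a3 a4 m03 m04 m34 hp03 hp04 hp34 hm03 hm04 hm34
  have t035 := tri n0 a0 a3 a5 m03 m05 m35 hp03 hp05 hp35 hm03 hm05 hm35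
  have t036 := tri n0 a0 a3 a6 m03 m06 m36 hp03 hp06 hp36 hm03 hm06 hm36
  have t045 := tri n0 a0 a4 a5 m04 m05 m45 hp04 hp05 hp45 hm04 hm05 hm45
  have t046 := tri n0 a0 a4 a6 m04 m06 m46 hp04 hp06 hp46 hm04 hm06 hm46
  have t056 := tri n0 a0 a5 a6 m05 m06 m56 hp05 hp06 hp56 hm05 hm06 hm56
  have t123 := tri n0 a1 a2 a3 m12 m13 m23 hp12 hp13 hp23 hm12 hm13 hm23
  have t124 := tri n0 a1 a2 a4 m12 m14 m24 hp12 hp14 hp24 hm12 hm14 hm24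
  have t125 := tri n0 a1 a2 a5 m12 m15 m25 hp12 hp15 hp25 hm12 hm15 hm25
  have t126 := tri n0 a1 a2 a6 m12 m16 m26 hp12 hp16 hp26 hm12 hm16 hm26
  have t134 := tri n0 a1 a3 a4 m13 m14 m34 hp13 hp14 hp34 hm13 hm14 hm34
  have t135 := tri n0 a1 a3 a5 m13 m15 m35 hp13 hp15 hp35 hm13 hm15 hm35
  have t136 := tri n0 a1 a3 a6 m13 m16 m36 hp13 hp16 hp36 hm13 hm16 hm36
  have t145 := tri n0 a1 a4 a5 m14 m15 m45 hp14 hp15 hp45 hm14 hm15 hm45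
  have t146 := tri n0 a1 a4 a6 m14 m16 m46 hp14 hp16 hp46 hm14 hm16 hm46
  have t156 := tri n0 a1 a5 a6 m15 m16 m56 hp15 hp16 hp56 hm15 hm16 hm56
  have t234 := tri n0 a2 a3 a4 m23 m24 m34 hp23 hp24 hp34 hm23 hm24 hm34
  have t235 := tri n0 a2 a3 a5 m23 m25 m35 hp23 hp25 hp35 hm23 hm25 hm35
  have t236 := tri n0 a2 a3 a6 m23 m26 m36 hp23 hp26 hp36 hm23 hm26 hm36
  have t245 := tri n0 a2 a4 a5 m24 m25 m45 hp24 hp25 hp45 hm24 hm25 hm45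
  have t246 := tri n0 a2 a4 a6 m24 m26 m46 hp24 hp26 hp46 hm24 hm26 hm46
  have t256 := tri n0 a2 a5 a6 m25 m26 m56 hp25 hp26 hp56 hm25 hm26 hm56
  have t345 := tri n0 a3 a4 a5 m34 m35 m45 hp34 hp35 hp45 hm34 hm35 hm45
  have t346 := tri n0 a3 a4 a6 m34 m36 m46 hp34 hp36 hp46 hm34 hm36 hm46
  have t356 := tri n0 a3 a5 a6 m35 m36 m56 hp35 hp36 hp56 hm35 hm36 hm56
  have t456 := tri n0 a4 a5 a6 m45 m46 m56 hp45 hp46 hp56 hm45 hm46 hm56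
  have hcut : 35*n0 + 15*(a0 + a1 + a2 + a3 + a4 + a5 + a6) + 5*(m01 + m02 + m03 + m04 + m05 + m06 + m12 + m13 + m14 + m15 + m16 + m23 + m24 + m25 + m26 + m34 + m35 + m36 + m45 + m46 + m56) ≤ 245 := by linarith
  have hM : m01 + m02 + m03 + m04 + m05 + m06 + m12 + m13 + m14 + m15 + m16 + m23 + m24 + m25 + m26 + m34 + m35 + m36 + m45 + m46 + m56 ≤ 21 := by linarith
  obtain ⟨hz, hs9, hM21⟩ := step2 n0 n1 n2 k (a0 + a1 + a2 + a3 + a4 + a5 + a6) (m01 + m02 + m03 + m04 + m05 + m06 + m12 + m13 + m14 + m15 + m16 + m23 + m24 + m25 + m26 + m34 + m35 + m36 + m45 + m46 + m56) h1 h2 h3 h4 hM hcut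
  obtain ⟨e01, e02, e03, e04, e05, e06, e12, e13, e14, e15, e16, e23, e24, e25, e26, e34, e35, e36, e45, e46, e56⟩ := step3 m01 m02 m03 m04 m05 m06 m12 m13 m14 m15 m16 m23 m24 m25 m26 m34 m35 m36 m45 m46 m56 hm01 hm02 hm03 hm04 hm05 hm06 hm12 hm13 hm14 hm15 hm16 hm23 hm24 hm25 hm26 hm34 hm35 hm36 hm45 hm46 hm56 hM21
  exact lastp a0 a1 a2 a3 a4 a5 a6 (pairbound n0 a0 a1 m01 hp01 hz e01) (pairbound n0 a0 a2 m02 hp02 hz e02) (pairbound n0 a0 a3 m03 hp03 hz e03) (pairbound n0 a0 a4 m04 hp04 hz e04) (pairbound n0 a0 a5 m05 hp05 hz e05) (pairbound n0 a0 a6 m06 hp06 hz e06) (pairbound n0 a1 a2 m12 hp12 hz e12) (pairbound n0 a1 a3 m13 hp13 hz e13) (pairbound n0 a1 a4 m14 hp14 hz e14) (pairbound n0 a1 a5 m15 hp15 hz e15) (pairbound n0 a1 a6 m16 hp16 hz e16) (pairbound n0 a2 a3 m23 hp23 hz e23) (pairbound n0 a2 a4 m24 hp24 hz e24) (pairbound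 n0 a2 a5 m25 hp25 hz e25) (pairbound n0 a2 a6 m26 hp26 hz e26) (pairbound n0 a3 a4 m34 hp34 hz e34) (pairbound n0 a3 a5 m35 hp35 hz e35) (pairbound n0 a3 a6 m36 hp36 hz e36) (pairbound n0 a4 a5 m45 hp45 hz e45) (pairbound n0 a4 a6 m46 hp46 hz e46) (pairbound n0 a5 a6 m56 hp56 hz e56) hs9

lemma lemA (E : Finset (Fin 7 × Fin 30)) (h : ¬ bContains 2 2 E) :
    ∀ y y' : Fin 30, y ≠ y' → ((Sfun E y) ∩ (Sfun E y')).card ≤ 1 := by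
  intro y y' hne
  by_contra hc
  push_neg at hc
  obtain ⟨x1, hx1, x2, hx2, hx12⟩ := Finset.one_lt_card.mp hc
  refine h ⟨{x1, x2}, {y, y'}, ?_, ?_, ?_⟩
  · rw [Finset.card_insert_of_notMem (by simp [hx12]), Finset.card_singleton]
  · rw [Finset.card_insert_of_notMem (by simp [hne]), Finset.card_singleton]
  · intro x hx z hz
    have hxS : x ∈ Sfun E y ∧ x ∈ Sfun E y' := by
      rcases Finset.mem_insert.mp hx with rfl | hx
      · exact ⟨(Finset.mem_inter.mp hx1).1, (Finset.mem_inter.mp hx1).2⟩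
      · rw [Finset.mem_singleton] at hx; subst hx
        exact ⟨(Finset.mem_inter.mp hx2).1, (Finset.mem_inter.mp hx2).2⟩
    rcases Finset.mem_insert.mp hz with rfl | hz
    · exact (Finset.mem_filter.mp hxS.1).2
    · rw [Finset.mem_singleton] at hz; subst hz
      exact (Finset.mem_filter.mp hxS.2).2

lemma lemB (E : Finset (Fin 7 × Fin 30)) (h : ¬ bContains 5 5 (bCompl E)) :
    ∀ P : Finset (Fin 7), P.card ≤ 2 →
      (Finset.univ.filter (fun y => Sfun E y ⊆ P)).card ≤ 4 := by
  intro P hP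
  by_contra hc
  push_neg at hc
  obtain ⟨B, hBsub, hBcard⟩ := Finset.exists_subset_card_eq (n := 5) hc
  have hPc : 5 ≤ (Finset.univ \ P).card := by
    rw [Finset.card_sdiff_of_subset (Finset.subset_univ P)]
    simp only [Finset.card_univ, Fintype.card_fin]
    omega
  obtain ⟨A, hAsub, hAcard⟩ := Finset.exists_subset_card_eq (n := 5) hPc
  refine h ⟨A, B, hAcard, hBcard, ?_⟩
  intro x hx y hy
  have hxP : x ∉ P := (Finset.mem_sdiff.mp (hAsub hx)).2
  have hyS : Sfun E y ⊆ P := (Finset.mem_filter.mp (hBsub hy)).2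
  simp only [bCompl, Finset.mem_sdiff, Finset.mem_univ, true_and]
  intro hE
  exact hxP (hyS (by simp [Sfun, hE]))

-- fibers are disjoint
lemma fib_disj (E : Finset (Fin 7 × Fin 30)) {T T' : Finset (Fin 7)} (h : T ≠ T') :
    Disjoint (Finset.univ.filter (fun y => Sfun E y = T))
      (Finset.univ.filter (fun y => Sfun E y = T')) := by
  rw [Finset.disjoint_left]
  intro y hy hy'
  exact h ((Finset.mem_filter.mp hy).2 ▸ (Finset.mem_filter.mp hy').2 ▸ rfl)

-- multiplicity bound for card-2 fibers
lemma fib_le_one (E : Finset (Fin 7 × Fin 30))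
    (hA : ∀ y y' : Fin 30, y ≠ y' → ((Sfun E y) ∩ (Sfun E y')).card ≤ 1)
    (T : Finset (Fin 7)) (hT : T.card = 2) : fib E T ≤ 1 := by
  by_contra hc
  push_neg at hc
  obtain ⟨y, hy, y', hy', hne⟩ := Finset.one_lt_card.mp hc
  have h1 := (Finset.mem_filter.mp hy).2
  have h2 := (Finset.mem_filter.mp hy').2
  have := hA y y' hne
  rw [h1, h2, Finset.inter_self, hT] at this
  omega

-- four distinct fibers inside a subset bound
lemma four_fib (E : Finset (Fin 7 × Fin 30))
    (hB : ∀ P : Finset (Fin 7), P.card ≤ 2 →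
      (Finset.univ.filter (fun y => Sfun E y ⊆ P)).card ≤ 4)
    (P T1 T2 T3 T4 : Finset (Fin 7)) (hP : P.card ≤ 2)
    (h12 : T1 ≠ T2) (h13 : T1 ≠ T3) (h14 : T1 ≠ T4)
    (h23 : T2 ≠ T3) (h24 : T2 ≠ T4) (h34 : T3 ≠ T4)
    (s1 : T1 ⊆ P) (s2 : T2 ⊆ P) (s3 : T3 ⊆ P) (s4 : T4 ⊆ P) :
    fib E T1 + fib E T2 + fib E T3 + fib E T4 ≤ 4 := by
  classical
  set F : Finset (Fin 7) → Finset (Fin 30) :=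
    fun T => Finset.univ.filter (fun y => Sfun E y = T) with hF
  have hd : ∀ {T T' : Finset (Fin 7)}, T ≠ T' → Disjoint (F T) (F T') :=
    fun h => fib_disj E h
  have e1 : (F T3 ∪ F T4).card = fib E T3 + fib E T4 :=
    Finset.card_union_of_disjoint (hd h34)
  have e2 : (F T2 ∪ (F T3 ∪ F T4)).card = fib E T2 + (fib E T3 + fib E T4) := by
    rw [Finset.card_union_of_disjoint
      (Finset.disjoint_union_right.mpr ⟨hd h23, hd h24⟩), e1]
    rfl
  have e3 : (F T1 ∪ (F T2 ∪ (F T3 ∪ F T4))).card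
      = fib E T1 + (fib E T2 + (fib E T3 + fib E T4)) := by
    rw [Finset.card_union_of_disjoint (Finset.disjoint_union_right.mpr ⟨hd h12,
      Finset.disjoint_union_right.mpr ⟨hd h13, hd h14⟩⟩), e2]
    rfl
  have hsub : F T1 ∪ (F T2 ∪ (F T3 ∪ F T4)) ⊆
      Finset.univ.filter (fun y => Sfun E y ⊆ P) := by
    intro y hy
    simp only [hF, Finset.mem_union, Finset.mem_filter, Finset.mem_univ, true_and] at hy ⊢
    rcases hy with h | h | h | h
    · exact h ▸ s1
    · exact h ▸ s2
    · exact h ▸ s3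
    · exact h ▸ s4
  have := le_trans (Finset.card_le_card hsub) (hB P hP)
  omega

-- the choose-2 count
lemma choose2_sum (E : Finset (Fin 7 × Fin 30))
    (hA : ∀ y y' : Fin 30, y ≠ y' → ((Sfun E y) ∩ (Sfun E y')).card ≤ 1) :
    ∑ y : Fin 30, ((Sfun E y).card.choose 2) ≤ 21 := by
  classical
  have hdisj : ∀ y ∈ (Finset.univ : Finset (Fin 30)), ∀ y' ∈ Finset.univ, y ≠ y' →
      Disjoint ((Sfun E y).powersetCard 2) ((Sfun E y').powersetCard 2) := by
    intro y _ y' _ hne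
    rw [Finset.disjoint_left]
    intro T hT hT'
    rw [Finset.mem_powersetCard] at hT hT'
    have hsub : T ⊆ Sfun E y ∩ Sfun E y' := Finset.subset_inter hT.1 hT'.1
    have := Finset.card_le_card hsub
    have := hA y y' hne
    omega
  have hcard : ∀ y : Fin 30, ((Sfun E y).powersetCard 2).card = (Sfun E y).card.choose 2 :=
    fun y => Finset.card_powersetCard 2 _
  calc ∑ y : Fin 30, ((Sfun E y).card.choose 2)
      = ∑ y : Fin 30, ((Sfun E y).powersetCard 2).card := by
        exact Finset.sum_congr rfl (fun y _ => (hcard y).symm)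
    _ = (Finset.univ.biUnion (fun y : Fin 30 => (Sfun E y).powersetCard 2)).card :=
        (Finset.card_biUnion hdisj).symm
    _ ≤ ((Finset.univ : Finset (Fin 7)).powersetCard 2).card := by
        apply Finset.card_le_card
        intro T hT
        rw [Finset.mem_biUnion] at hT
        obtain ⟨y, _, hT⟩ := hT
        rw [Finset.mem_powersetCard] at hT ⊢
        exact ⟨Finset.subset_univ T, hT.2⟩
    _ = 21 := by rw [Finset.card_powersetCard]; rfl

lemma card_filter_le_list (E : Finset (Fin 7 × Fin 30)) :
    ∀ (L : List (Finset (Fin 7))) (p : Fin 30 → Prop) [DecidablePred p],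
    (∀ y, p y → Sfun E y ∈ L) →
    (Finset.univ.filter p).card ≤ (L.map (fib E)).sum := by
  intro L
  induction L with
  | nil =>
    intro p _ h
    simp only [List.map_nil, List.sum_nil, Nat.le_zero, Finset.card_eq_zero]
    rw [Finset.filter_eq_empty_iff]
    intro y _ hy
    simpa using h y hy
  | cons T L ih =>
    intro p _ h
    have hsub : Finset.univ.filter p ⊆
        Finset.univ.filter (fun y => Sfun E y = T) ∪
        Finset.univ.filter (fun y => p y ∧ Sfun E y ≠ T) := by
      intro y hy
      simp only [Finset.mem_filter, Finset.mem_univ, true_and, Finset.mem_union] at hy ⊢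
      by_cases hT : Sfun E y = T
      · exact Or.inl hT
      · exact Or.inr ⟨hy, hT⟩
    have h2 := ih (fun y => p y ∧ Sfun E y ≠ T) (fun y hy => by
      rcases List.mem_cons.mp (h y hy.1) with h' | h'
      · exact absurd h' hy.2
      · exact h')
    have h3 := le_trans (Finset.card_le_card hsub) (Finset.card_union_le _ _)
    simp only [List.map_cons, List.sum_cons]
    have : (Finset.univ.filter (fun y => Sfun E y = T)).card = fib E T := rfl
    omega

lemma partition_card (E : Finset (Fin 7 × Fin 30)) :
    (Finset.univ.filter (fun y => (Sfun E y).card ≤ 1)).card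
    + (Finset.univ.filter (fun y => (Sfun E y).card = 2)).card
    + (Finset.univ.filter (fun y => 3 ≤ (Sfun E y).card)).card = 30 := by
  classical
  have A := Finset.card_filter_add_card_filter_not
    (s := (Finset.univ : Finset (Fin 30))) (p := fun y => (Sfun E y).card ≤ 1)
  have B := Finset.card_filter_add_card_filter_not
    (s := Finset.univ.filter (fun y => ¬ (Sfun E y).card ≤ 1))
    (p := fun y => (Sfun E y).card = 2)
  rw [Finset.filter_filter, Finset.filter_filter] at B
  have e1 : Finset.univ.filter (fun y => ¬ (Sfun E y).card ≤ 1 ∧ (Sfun E y).card = 2)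
      = Finset.univ.filter (fun y => (Sfun E y).card = 2) := by
    apply Finset.filter_congr; intro y _; constructor <;> intro h <;> [exact h.2; exact ⟨by omega, h⟩]
  have e2 : Finset.univ.filter (fun y => ¬ (Sfun E y).card ≤ 1 ∧ ¬ (Sfun E y).card = 2)
      = Finset.univ.filter (fun y => 3 ≤ (Sfun E y).card) := by
    apply Finset.filter_congr; intro y _; constructor <;> intro h <;> [omega; omega]
  rw [e1, e2] at B
  rw [Finset.card_univ, Fintype.card_fin] at A
  omega

lemma count_bound (E : Finset (Fin 7 × Fin 30))
    (hkey : ∑ y : Fin 30, ((Sfun E y).card.choose 2) ≤ 21) :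
    (Finset.univ.filter (fun y => (Sfun E y).card = 2)).card
    + 3 * (Finset.univ.filter (fun y => 3 ≤ (Sfun E y).card)).card ≤ 21 := by
  classical
  have hsplit := Finset.sum_filter_add_sum_filter_not (Finset.univ : Finset (Fin 30))
    (fun y => (Sfun E y).card = 2) (fun y => (Sfun E y).card.choose 2)
  have e1 : ∑ y ∈ Finset.univ.filter (fun y => (Sfun E y).card = 2),
      ((Sfun E y).card.choose 2)
      = (Finset.univ.filter (fun y => (Sfun E y).card = 2)).card := by
    rw [Finset.sum_congr rfl (fun y hy => by
      rw [(Finset.mem_filter.mp hy).2])]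
    simp
  have e2 : 3 * (Finset.univ.filter (fun y => 3 ≤ (Sfun E y).card)).card
      ≤ ∑ y ∈ Finset.univ.filter (fun y => ¬ (Sfun E y).card = 2),
        ((Sfun E y).card.choose 2) := by
    calc 3 * (Finset.univ.filter (fun y => 3 ≤ (Sfun E y).card)).card
        = ∑ _y ∈ Finset.univ.filter (fun y => 3 ≤ (Sfun E y).card), 3 := by
          rw [Finset.sum_const, smul_eq_mul, mul_comm]
      _ ≤ ∑ y ∈ Finset.univ.filter (fun y => 3 ≤ (Sfun E y).card),
            ((Sfun E y).card.choose 2) := by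
          apply Finset.sum_le_sum
          intro y hy
          have h3 := (Finset.mem_filter.mp hy).2
          calc 3 = Nat.choose 3 2 := rfl
            _ ≤ (Sfun E y).card.choose 2 := Nat.choose_le_choose 2 h3
      _ ≤ ∑ y ∈ Finset.univ.filter (fun y => ¬ (Sfun E y).card = 2),
            ((Sfun E y).card.choose 2) := by
          apply Finset.sum_le_sum_of_subset
          exact Finset.monotone_filter_right _ (fun y hy => by omega)
  omega

set_option maxHeartbeats 800000 in
theorem stmt_6 (E : Finset (Fin 7 × Fin 30)) :
    bContains 2 2 E ∨ bContains 5 5 (bCompl E) := by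
  by_contra hcon
  rcases not_or.mp hcon with ⟨hg1, hg2⟩
  have hA := lemA E hg1
  have hB := lemB E hg2
  have H1 := partition_card E
  have H4 := count_bound E (choose2_sum E hA)
  have cls1 : ∀ T : Finset (Fin 7), T.card ≤ 1 → T ∈ ([∅, {0}, {1}, {2}, {3}, {4}, {5}, {6}] : List (Finset (Fin 7))) := by decide
  have cls2 : ∀ T : Finset (Fin 7), T.card = 2 → T ∈ ([{0, 1}, {0, 2}, {0, 3}, {0, 4}, {0, 5}, {0, 6}, {1, 2}, {1, 3}, {1, 4}, {1, 5}, {1, 6}, {2, 3}, {2, 4}, {2, 5}, {2, 6}, {3, 4}, {3, 5}, {3, 6}, {4, 5}, {4, 6}, {5, 6}] : List (Finset (Fin 7))) := by decide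
  have H2' := card_filter_le_list E [∅, {0}, {1}, {2}, {3}, {4}, {5}, {6}] (fun y => (Sfun E y).card ≤ 1) (fun y hy => cls1 _ hy)
  have H3' := card_filter_le_list E [{0, 1}, {0, 2}, {0, 3}, {0, 4}, {0, 5}, {0, 6}, {1, 2}, {1, 3}, {1, 4}, {1, 5}, {1, 6}, {2, 3}, {2, 4}, {2, 5}, {2, 6}, {3, 4}, {3, 5}, {3, 6}, {4, 5}, {4, 6}, {5, 6}] (fun y => (Sfun E y).card = 2) (fun y hy => cls2 _ hy)
  simp only [List.map_cons, List.map_nil, List.sum_cons, List.sum_nil] at H2' H3'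
  have H2 : (Finset.univ.filter (fun y => (Sfun E y).card ≤ 1)).card ≤ fib E ∅ + (fib E {0} + fib E {1} + fib E {2} + fib E {3} + fib E {4} + fib E {5} + fib E {6}) := by omega
  have H3 : (Finset.univ.filter (fun y => (Sfun E y).card = 2)).card ≤ fib E {0, 1} + fib E {0, 2} + fib E {0, 3} + fib E {0, 4} + fib E {0, 5} + fib E {0, 6} + fib E {1, 2} + fib E {1, 3} + fib E {1, 4} + fib E {1, 5} + fib E {1, 6} + fib E {2, 3} + fib E {2, 4} + fib E {2, 5} + fib E {2, 6} + fib E {3, 4} + fib E {3, 5} + fib E {3, 6} + fib E {4, 5} + fib E {4, 6} + fib E {5, 6} := by simpa only [add_assoc, add_zero] using H3'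
  have hm01 : fib E ({0, 1} : Finset (Fin 7)) ≤ 1 := fib_le_one E hA _ (by decide)
  have hm02 : fib E ({0, 2} : Finset (Fin 7)) ≤ 1 := fib_le_one E hA _ (by decide)
  have hm03 : fib E ({0, 3} : Finset (Fin 7)) ≤ 1 := fib_le_one E hA _ (by decide)
  have hm04 : fib E ({0, 4} : Finset (Fin 7)) ≤ 1 := fib_le_one E hA _ (by decide)
  have hm05 : fib E ({0, 5} : Finset (Fin 7)) ≤ 1 := fib_le_one E hA _ (by decide)
  have hm06 : fib E ({0, 6} : Finset (Fin 7)) ≤ 1 := fib_le_one E hA _ (by decide)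
  have hm12 : fib E ({1, 2} : Finset (Fin 7)) ≤ 1 := fib_le_one E hA _ (by decide)
  have hm13 : fib E ({1, 3} : Finset (Fin 7)) ≤ 1 := fib_le_one E hA _ (by decide)
  have hm14 : fib E ({1, 4} : Finset (Fin 7)) ≤ 1 := fib_le_one E hA _ (by decide)
  have hm15 : fib E ({1, 5} : Finset (Fin 7)) ≤ 1 := fib_le_one E hA _ (by decide)
  have hm16 : fib E ({1, 6} : Finset (Fin 7)) ≤ 1 := fib_le_one E hA _ (by decide)
  have hm23 : fib E ({2, 3} : Finset (Fin 7)) ≤ 1 := fib_le_one E hA _ (by decide)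
  have hm24 : fib E ({2, 4} : Finset (Fin 7)) ≤ 1 := fib_le_one E hA _ (by decide)
  have hm25 : fib E ({2, 5} : Finset (Fin 7)) ≤ 1 := fib_le_one E hA _ (by decide)
  have hm26 : fib E ({2, 6} : Finset (Fin 7)) ≤ 1 := fib_le_one E hA _ (by decide)
  have hm34 : fib E ({3, 4} : Finset (Fin 7)) ≤ 1 := fib_le_one E hA _ (by decide)
  have hm35 : fib E ({3, 5} : Finset (Fin 7)) ≤ 1 := fib_le_one E hA _ (by decide)
  have hm36 : fib E ({3, 6} : Finset (Fin 7)) ≤ 1 := fib_le_one E hA _ (by decide)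
  have hm45 : fib E ({4, 5} : Finset (Fin 7)) ≤ 1 := fib_le_one E hA _ (by decide)
  have hm46 : fib E ({4, 6} : Finset (Fin 7)) ≤ 1 := fib_le_one E hA _ (by decide)
  have hm56 : fib E ({5, 6} : Finset (Fin 7)) ≤ 1 := fib_le_one E hA _ (by decide)
  have hp01 : fib E ∅ + fib E {0} + fib E {1} + fib E {0, 1} ≤ 4 :=
    four_fib E hB {0, 1} ∅ {0} {1} {0, 1} (by decide) (by decide) (by decide) (by decide) (by decide) (by decide) (by decide) (by decide) (by decide) (by decide) (by decide)
  have hp02 : fib E ∅ + fib E {0} + fib E {2} + fib E {0, 2} ≤ 4 :=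
    four_fib E hB {0, 2} ∅ {0} {2} {0, 2} (by decide) (by decide) (by decide) (by decide) (by decide) (by decide) (by decide) (by decide) (by decide) (by decide) (by decide)
  have hp03 : fib E ∅ + fib E {0} + fib E {3} + fib E {0, 3} ≤ 4 :=
    four_fib E hB {0, 3} ∅ {0} {3} {0, 3} (by decide) (by decide) (by decide) (by decide) (by decide) (by decide) (by decide) (by decide) (by decide) (by decide) (by decide)
  have hp04 : fib E ∅ + fib E {0} + fib E {4} + fib E {0, 4} ≤ 4 :=
    four_fib E hB {0, 4} ∅ {0} {4} {0, 4} (by decide) (by decide) (by decide) (by decide) (by decide) (by decide) (by decide) (by decide) (by decide) (by decide) (by decide)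
  have hp05 : fib E ∅ + fib E {0} + fib E {5} + fib E {0, 5} ≤ 4 :=
    four_fib E hB {0, 5} ∅ {0} {5} {0, 5} (by decide) (by decide) (by decide) (by decide) (by decide) (by decide) (by decide) (by decide) (by decide) (by decide) (by decide)
  have hp06 : fib E ∅ + fib E {0} + fib E {6} + fib E {0, 6} ≤ 4 :=
    four_fib E hB {0, 6} ∅ {0} {6} {0, 6} (by decide) (by decide) (by decide) (by decide) (by decide) (by decide) (by decide) (by decide) (by decide) (by decide) (by decide)
  have hp12 : fib E ∅ + fib E {1} + fib E {2} + fib E {1, 2} ≤ 4 :=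
    four_fib E hB {1, 2} ∅ {1} {2} {1, 2} (by decide) (by decide) (by decide) (by decide) (by decide) (by decide) (by decide) (by decide) (by decide) (by decide) (by decide)
  have hp13 : fib E ∅ + fib E {1} + fib E {3} + fib E {1, 3} ≤ 4 :=
    four_fib E hB {1, 3} ∅ {1} {3} {1, 3} (by decide) (by decide) (by decide) (by decide) (by decide) (by decide) (by decide) (by decide) (by decide) (by decide) (by decide)
  have hp14 : fib E ∅ + fib E {1} + fib E {4} + fib E {1, 4} ≤ 4 :=
    four_fib E hB {1, 4} ∅ {1} {4} {1, 4} (by decide) (by decide) (by decide) (by decide) (by decide) (by decide) (by decide) (by decide) (by decide) (by decide) (by decide)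
  have hp15 : fib E ∅ + fib E {1} + fib E {5} + fib E {1, 5} ≤ 4 :=
    four_fib E hB {1, 5} ∅ {1} {5} {1, 5} (by decide) (by decide) (by decide) (by decide) (by decide) (by decide) (by decide) (by decide) (by decide) (by decide) (by decide)
  have hp16 : fib E ∅ + fib E {1} + fib E {6} + fib E {1, 6} ≤ 4 :=
    four_fib E hB {1, 6} ∅ {1} {6} {1, 6} (by decide) (by decide) (by decide) (by decide) (by decide) (by decide) (by decide) (by decide) (by decide) (by decide) (by decide)
  have hp23 : fib E ∅ + fib E {2} + fib E {3} + fib E {2, 3} ≤ 4 :=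
    four_fib E hB {2, 3} ∅ {2} {3} {2, 3} (by decide) (by decide) (by decide) (by decide) (by decide) (by decide) (by decide) (by decide) (by decide) (by decide) (by decide)
  have hp24 : fib E ∅ + fib E {2} + fib E {4} + fib E {2, 4} ≤ 4 :=
    four_fib E hB {2, 4} ∅ {2} {4} {2, 4} (by decide) (by decide) (by decide) (by decide) (by decide) (by decide) (by decide) (by decide) (by decide) (by decide) (by decide)
  have hp25 : fib E ∅ + fib E {2} + fib E {5} + fib E {2, 5} ≤ 4 :=
    four_fib E hB {2, 5} ∅ {2} {5} {2, 5} (by decide) (by decide) (by decide) (by decide) (by decide) (by decide) (by decide) (by decide) (by decide) (by decide) (by decide)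
  have hp26 : fib E ∅ + fib E {2} + fib E {6} + fib E {2, 6} ≤ 4 :=
    four_fib E hB {2, 6} ∅ {2} {6} {2, 6} (by decide) (by decide) (by decide) (by decide) (by decide) (by decide) (by decide) (by decide) (by decide) (by decide) (by decide)
  have hp34 : fib E ∅ + fib E {3} + fib E {4} + fib E {3, 4} ≤ 4 :=
    four_fib E hB {3, 4} ∅ {3} {4} {3, 4} (by decide) (by decide) (by decide) (by decide) (by decide) (by decide) (by decide) (by decide) (by decide) (by decide) (by decide)
  have hp35 : fib E ∅ + fib E {3} + fib E {5} + fib E {3, 5} ≤ 4 :=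
    four_fib E hB {3, 5} ∅ {3} {5} {3, 5} (by decide) (by decide) (by decide) (by decide) (by decide) (by decide) (by decide) (by decide) (by decide) (by decide) (by decide)
  have hp36 : fib E ∅ + fib E {3} + fib E {6} + fib E {3, 6} ≤ 4 :=
    four_fib E hB {3, 6} ∅ {3} {6} {3, 6} (by decide) (by decide) (by decide) (by decide) (by decide) (by decide) (by decide) (by decide) (by decide) (by decide) (by decide)
  have hp45 : fib E ∅ + fib E {4} + fib E {5} + fib E {4, 5} ≤ 4 :=
    four_fib E hB {4, 5} ∅ {4} {5} {4, 5} (by decide) (by decide) (by decide) (by decide) (by decide) (by decide) (by decide) (by decide) (by decide) (by decide) (by decide)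
  have hp46 : fib E ∅ + fib E {4} + fib E {6} + fib E {4, 6} ≤ 4 :=
    four_fib E hB {4, 6} ∅ {4} {6} {4, 6} (by decide) (by decide) (by decide) (by decide) (by decide) (by decide) (by decide) (by decide) (by decide) (by decide) (by decide)
  have hp56 : fib E ∅ + fib E {5} + fib E {6} + fib E {5, 6} ≤ 4 :=
    four_fib E hB {5, 6} ∅ {5} {6} {5, 6} (by decide) (by decide) (by decide) (by decide) (by decide) (by decide) (by decide) (by decide) (by decide) (by decide) (by decide)
  exact core (fib E ∅) _ _ _ (fib E {0}) (fib E {1}) (fib E {2}) (fib E {3}) (fib E {4}) (fib E {5}) (fib E {6}) (fib E {0, 1}) (fib E {0, 2}) (fib E {0, 3}) (fib E {0, 4}) (fib E {0, 5}) (fib E {0, 6}) (fib E {1, 2}) (fib E {1, 3}) (fib E {1, 4}) (fib E {1, 5}) (fib E {1, 6}) (fib E {2, 3}) (fib E {2, 4}) (fib E {2, 5}) (fib E {2, 6}) (fib E {3, 4}) (fib E {3, 5}) (fib E {3, 6}) (fib E {4, 5}) (fib E {4, 6}) (fib E {5, 6})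
    H1 H2 H3 H4 hm01 hm02 hm03 hm04 hm05 hm06 hm12 hm13 hm14 hm15 hm16 hm23 hm24 hm25 hm26 hm34 hm35 hm36 hm45 hm46 hm56 hp01 hp02 hp03 hp04 hp05 hp06 hp12 hp13 hp14 hp15 hp16 hp23 hp24 hp25 hp26 hp34 hp35 hp36 hp45 hp46 hp56
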